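/- For every i ∈ ℕ₀ one has D₂(z_i) = q21^{-i}·b_i·x1^i, where b_0 := 1 and b_i := ∏_{j=0}^{i-1}(1 − q11^j·q12·q21). -/

import Mathlib

noncomputable section

variable {k : Type*} [Field k]

/-- The algebra endomorphism of the free algebra on two generators with
`x1 ↦ a • x1`, `x2 ↦ b • x2`. -/
def alph (a b : k) : FreeAlgebra k (Fin 2) →ₐ[k] FreeAlgebra k (Fin 2) :=
  FreeAlgebra.lift k ![a • FreeAlgebra.ι k 0, b • FreeAlgebra.ι k 1]

/-- The elements `z_i`, defined by `z_0 = x2`, `z_{i+1} = x1·z_i − q11^i·q12·z_i·x1`. -/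
def zz (q11 q12 : k) : ℕ → FreeAlgebra k (Fin 2)
  | 0 => FreeAlgebra.ι k 1
  | (i + 1) => FreeAlgebra.ι k 0 * zz q11 q12 i
      - (q11 ^ i * q12) • (zz q11 q12 i * FreeAlgebra.ι k 0)

/-- The elements `u_i`, defined by `u_0 = x1`, `u_{i+1} = u_i·x2 − q12·q22^i·x2·u_i`. -/
def uu (q12 q22 : k) : ℕ → FreeAlgebra k (Fin 2)
  | 0 => FreeAlgebra.ι k 0
  | (i + 1) => uu q12 q22 i * FreeAlgebra.ι k 1
      - (q12 * q22 ^ i) • (FreeAlgebra.ι k 1 * uu q12 q22 i)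

/-- The q-number `[m]_p = 1 + p + ⋯ + p^{m-1}`. -/
def qnum (p : k) (m : ℕ) : k := ∑ j ∈ Finset.range m, p ^ j

/-- The q-factorial `[m]!_p = [1]_p·[2]_p⋯[m]_p`. -/
def qfact (p : k) (m : ℕ) : k := ∏ l ∈ Finset.range m, qnum p (l + 1)

/-- `b_i = ∏_{j=0}^{i-1} (1 − q11^j·q12·q21)`. -/
def bb (q11 q12 q21 : k) (i : ℕ) : k :=
  ∏ j ∈ Finset.range i, (1 - q11 ^ j * q12 * q21)

/-- `c_i = q21^{-i}·b_i·[i]!_{q11⁻¹}`. -/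
def cc (q11 q12 q21 : k) (i : ℕ) : k :=
  q21⁻¹ ^ i * bb q11 q12 q21 i * qfact q11⁻¹ i

/-- `d_{i,0}`. -/
def dd (q11 q12 q21 q22 : k) (i : ℕ) : k :=
  q21⁻¹ * (1 - q11 ^ i * q12 * q21) * qnum q11⁻¹ (i + 1)
    + (q11 ^ (i * (i + 1)) * q12 ^ i * q21 ^ (i + 1) * q22)⁻¹
    - q11 ^ (i * (i + 1)) * q12 ^ (i + 1) * q21 ^ i * q22

theorem D2_z_eq
    (q11 q12 q21 q22 : k)
    (hq11 : q11 ≠ 0) (hq12 : q12 ≠ 0) (hq21 : q21 ≠ 0) (hq22 : q22 ≠ 0)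
    (D1 : FreeAlgebra k (Fin 2) →ₗ[k] FreeAlgebra k (Fin 2))
    (hD1one : D1 1 = 0)
    (hD1x1 : D1 (FreeAlgebra.ι k 0) = 1)
    (hD1x2 : D1 (FreeAlgebra.ι k 1) = 0)
    (hD1mul : ∀ a b : FreeAlgebra k (Fin 2),
      D1 (a * b) = D1 a * b + alph q11⁻¹ q12⁻¹ a * D1 b)
    (D2 : FreeAlgebra k (Fin 2) →ₗ[k] FreeAlgebra k (Fin 2))
    (hD2one : D2 1 = 0)
    (hD2x1 : D2 (FreeAlgebra.ι k 0) = 0)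
    (hD2x2 : D2 (FreeAlgebra.ι k 1) = 1)
    (hD2mul : ∀ a b : FreeAlgebra k (Fin 2),
      D2 (a * b) = D2 a * b + alph q21⁻¹ q22⁻¹ a * D2 b)
 :
    ∀ i : ℕ, D2 (zz q11 q12 i)
      = (q21⁻¹ ^ i * bb q11 q12 q21 i) • ((FreeAlgebra.ι k 0 : FreeAlgebra k (Fin 2)) ^ i) := by
  have halph : alph (q21⁻¹) (q22⁻¹) (FreeAlgebra.ι k (0 : Fin 2))
      = q21⁻¹ • FreeAlgebra.ι k (0 : Fin 2) := by
    simp [alph]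
  intro i
  induction i with
  | zero => simp [zz, bb, hD2x2]
  | succ i ih =>
    have hc : q21⁻¹ * (q21⁻¹ ^ i * bb q11 q12 q21 i)
        - q11 ^ i * q12 * (q21⁻¹ ^ i * bb q11 q12 q21 i)
        = q21⁻¹ ^ (i + 1) * bb q11 q12 q21 (i + 1) := by
      rw [show bb q11 q12 q21 (i + 1)
          = bb q11 q12 q21 i * (1 - q11 ^ i * q12 * q21) from Finset.prod_range_succ _ _]
      field_simp
      linear_combination (q21 * q21⁻¹ ^ i * bb q11 q12 q21 i * q11 ^ i * q12 - q21⁻¹ ^ i * bb q11 q12 q21 i) * mul_inv_cancel₀ hq21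
    rw [zz, map_sub, map_smul, hD2mul, hD2mul, hD2x1, ih, halph]
    rw [mul_zero, add_zero, zero_mul, zero_add, smul_mul_smul_comm,
      smul_mul_assoc, smul_smul]
    rw [← pow_succ', ← pow_succ, ← sub_smul, hc]
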